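/- Let μ₁ and μ₂ be probability measures on a common measurable space with μ₁ absolutely continuous with respect to μ₂, and let I(μ₁|μ₂) = ∫ log(dμ₁/dμ₂) dμ₁ denote the relative entropy. Then ∫ |log(dμ₁/dμ₂)| dμ₁ ≤ I(μ₁|μ₂) + √(2 I(μ₁|μ₂)). -/

import Mathlib

open MeasureTheory


noncomputable def hAux (t : ℝ) : ℝ := Real.log t - 3/2 * ((t-1)*(t+5) / (t+2)^2)

noncomputable def gAux (t : ℝ) : ℝ := t * Real.log t - t + 1 - 3/2 * ((t-1)^2 / (t+2))

lemma hasDerivAt_hAux {t : ℝ} (ht : 0 < t) :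
    HasDerivAt hAux ((t-1)^2 * (t+8) / (t * (t+2)^3)) t := by
  have ht2 : (t + 2) ^ 2 ≠ 0 := by positivity
  have h1 : HasDerivAt (fun t : ℝ => (t-1)*(t+5)) (2*t+4) t := by
    have := (((hasDerivAt_id t).sub_const 1).fun_mul ((hasDerivAt_id t).add_const 5))
    simp only [id_eq] at this
    exact this.congr_deriv (by ring)
  have h2 : HasDerivAt (fun t : ℝ => (t+2)^2) (2*(t+2)) t := by
    have := ((hasDerivAt_id t).add_const 2).fun_pow 2
    simp only [id_eq] at this
    exact this.congr_deriv (by ring)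
  have h3 := (h1.div h2 ht2).const_mul (3/2 : ℝ)
  have h4 : HasDerivAt hAux
      (t⁻¹ - 3 / 2 * (((2 * t + 4) * (t + 2) ^ 2 - (t - 1) * (t + 5) * (2 * (t + 2))) / ((t + 2) ^ 2) ^ 2)) t :=
    (Real.hasDerivAt_log ht.ne').sub h3
  have hval : t⁻¹ - 3 / 2 * (((2 * t + 4) * (t + 2) ^ 2 - (t - 1) * (t + 5) * (2 * (t + 2))) / ((t + 2) ^ 2) ^ 2)
      = (t-1)^2 * (t+8) / (t * (t+2)^3) := by
    field_simp
    ring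
  exact hval ▸ h4

lemma hasDerivAt_gAux {t : ℝ} (ht : 0 < t) : HasDerivAt gAux (hAux t) t := by
  have ht2 : (t + 2) ≠ 0 := by positivity
  have h1 : HasDerivAt (fun t : ℝ => t * Real.log t) (Real.log t + 1) t := by
    have := (hasDerivAt_id t).fun_mul (Real.hasDerivAt_log ht.ne')
    simp only [id_eq, one_mul] at this
    exact this.congr_deriv (by rw [mul_inv_cancel₀ ht.ne'])
  have h2 : HasDerivAt (fun t : ℝ => (t-1)^2) (2*(t-1)) t := by
    have := ((hasDerivAt_id t).sub_const 1).fun_pow 2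
    simp only [id_eq] at this
    exact this.congr_deriv (by ring)
  have h3 : HasDerivAt (fun t : ℝ => t+2) 1 t := (hasDerivAt_id t).add_const 2
  have h4 := ((h2.fun_div h3 ht2).const_mul (3/2 : ℝ))
  have h5 : HasDerivAt gAux
      (Real.log t + 1 - 1 - 3 / 2 * ((2 * (t - 1) * (t + 2) - (t - 1) ^ 2 * 1) / (t + 2) ^ 2)) t := by
    have := ((h1.fun_sub (hasDerivAt_id t)).add_const 1).fun_sub h4
    simp only [id_eq] at this
    exact this
  have hval : Real.log t + 1 - 1 - 3 / 2 * ((2 * (t - 1) * (t + 2) - (t - 1) ^ 2 * 1) / (t + 2) ^ 2)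
      = hAux t := by
    unfold hAux
    field_simp
    ring
  exact hval ▸ h5

lemma hAux_one : hAux 1 = 0 := by simp [hAux]

lemma gAux_one : gAux 1 = 0 := by simp [gAux]

lemma hAux_nonneg {t : ℝ} (ht : 1 ≤ t) : 0 ≤ hAux t := by
  rw [← hAux_one]
  have hmono : MonotoneOn hAux (Set.Icc 1 t) := by
    apply monotoneOn_of_deriv_nonneg (convex_Icc 1 t)
    · intro x hx
      have hx0 : (0:ℝ) < x := by linarith [hx.1]
      exact (hasDerivAt_hAux hx0).continuousAt.continuousWithinAt
    · intro x hx
      rw [interior_Icc] at hx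
      have hx0 : (0:ℝ) < x := by linarith [hx.1]
      exact (hasDerivAt_hAux hx0).differentiableAt.differentiableWithinAt
    · intro x hx
      rw [interior_Icc] at hx
      have hx0 : (0:ℝ) < x := by linarith [hx.1]
      rw [(hasDerivAt_hAux hx0).deriv]
      positivity
  exact hmono (Set.left_mem_Icc.2 ht) (Set.right_mem_Icc.2 ht) ht

lemma hAux_nonpos {t : ℝ} (ht0 : 0 < t) (ht : t ≤ 1) : hAux t ≤ 0 := by
  rw [← hAux_one]
  have hmono : MonotoneOn hAux (Set.Icc t 1) := by
    apply monotoneOn_of_deriv_nonneg (convex_Icc t 1)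
    · intro x hx
      have hx0 : (0:ℝ) < x := lt_of_lt_of_le ht0 hx.1
      exact (hasDerivAt_hAux hx0).continuousAt.continuousWithinAt
    · intro x hx
      rw [interior_Icc] at hx
      have hx0 : (0:ℝ) < x := lt_trans ht0 hx.1
      exact (hasDerivAt_hAux hx0).differentiableAt.differentiableWithinAt
    · intro x hx
      rw [interior_Icc] at hx
      have hx0 : (0:ℝ) < x := lt_trans ht0 hx.1
      rw [(hasDerivAt_hAux hx0).deriv]
      positivity
  exact hmono (Set.left_mem_Icc.2 ht) (Set.right_mem_Icc.2 ht) ht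

lemma gAux_nonneg {t : ℝ} (ht : 0 ≤ t) : 0 ≤ gAux t := by
  rcases eq_or_lt_of_le ht with h0 | ht0
  · simp [gAux, ← h0]; norm_num
  rcases le_total 1 t with h1 | h1
  · rw [← gAux_one]
    have hmono : MonotoneOn gAux (Set.Icc 1 t) := by
      apply monotoneOn_of_deriv_nonneg (convex_Icc 1 t)
      · intro x hx
        have hx0 : (0:ℝ) < x := by linarith [hx.1]
        exact (hasDerivAt_gAux hx0).continuousAt.continuousWithinAt
      · intro x hx
        rw [interior_Icc] at hx
        have hx0 : (0:ℝ) < x := by linarith [hx.1]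
        exact (hasDerivAt_gAux hx0).differentiableAt.differentiableWithinAt
      · intro x hx
        rw [interior_Icc] at hx
        have hx0 : (0:ℝ) < x := by linarith [hx.1]
        rw [(hasDerivAt_gAux hx0).deriv]
        exact hAux_nonneg (le_of_lt hx.1)
    exact hmono (Set.left_mem_Icc.2 h1) (Set.right_mem_Icc.2 h1) h1
  · rw [← gAux_one]
    have hmono : AntitoneOn gAux (Set.Icc t 1) := by
      apply antitoneOn_of_deriv_nonpos (convex_Icc t 1)
      · intro x hx
        have hx0 : (0:ℝ) < x := lt_of_lt_of_le ht0 hx.1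
        exact (hasDerivAt_gAux hx0).continuousAt.continuousWithinAt
      · intro x hx
        rw [interior_Icc] at hx
        have hx0 : (0:ℝ) < x := lt_trans ht0 hx.1
        exact (hasDerivAt_gAux hx0).differentiableAt.differentiableWithinAt
      · intro x hx
        rw [interior_Icc] at hx
        have hx0 : (0:ℝ) < x := lt_trans ht0 hx.1
        rw [(hasDerivAt_gAux hx0).deriv]
        exact hAux_nonpos hx0 (le_of_lt hx.2)
    exact hmono (Set.left_mem_Icc.2 h1) (Set.right_mem_Icc.2 h1) h1

/-- pointwise key inequality -/
lemma key_ineq {t : ℝ} (ht : 0 ≤ t) :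
    3/2 * ((t-1)^2 / (t+2)) ≤ t * Real.log t - t + 1 := by
  have := gAux_nonneg ht
  unfold gAux at this
  linarith



/-- pointwise: t * (log t)⁻ ≤ (|t-1| - (t-1))/2 for t ≥ 0 -/
lemma ptwise1 {t : ℝ} (ht : 0 ≤ t) :
    t * max (-(Real.log t)) 0 ≤ (|t - 1| - (t - 1)) / 2 := by
  rcases eq_or_lt_of_le ht with h0 | ht0
  · rw [← h0]
    norm_num
  rcases le_total 1 t with h1 | h1
  · have hm : max (-(Real.log t)) 0 = 0 :=
      max_eq_right (neg_nonpos.mpr (Real.log_nonneg h1))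
    rw [hm, mul_zero, abs_of_nonneg (by linarith : (0:ℝ) ≤ t - 1)]
    linarith
  · have hlog : Real.log t ≤ 0 := Real.log_nonpos ht h1
    have hm : max (-(Real.log t)) 0 = -(Real.log t) := max_eq_left (by linarith)
    rw [hm, abs_of_nonpos (by linarith : t - 1 ≤ 0)]
    have hkey : Real.log t⁻¹ ≤ t⁻¹ - 1 := Real.log_le_sub_one_of_pos (inv_pos.mpr ht0)
    rw [Real.log_inv] at hkey
    have h2 := mul_le_mul_of_nonneg_left hkey ht
    have h3 : t * (t⁻¹ - 1) = 1 - t := by field_simp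
    linarith

/-- pointwise AM-GM -/
lemma ptwise2 {t l : ℝ} (ht : 0 ≤ t) (hl : 0 < l) :
    |t - 1| ≤ (l * ((t - 1)^2 / (t + 2)) + (t + 2) / l) / 2 := by
  have h2 : (0:ℝ) < t + 2 := by linarith
  have hb : |t - 1|^2 = (t - 1)^2 := sq_abs _
  rw [← hb]
  set b := |t - 1| with hbdef
  have hbn : 0 ≤ b := abs_nonneg _
  have heq : (l * (b^2 / (t + 2)) + (t + 2) / l) / 2 - b
      = (l * b - (t + 2))^2 / (2 * l * (t + 2)) := by
    field_simp
    ring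
  have hpos : 0 ≤ (l * b - (t + 2))^2 / (2 * l * (t + 2)) := by positivity
  linarith


/-- For probability measures `μ₁ ≪ μ₂` with finite relative entropy
`I = ∫ log(dμ₁/dμ₂) dμ₁`, one has `∫ |log(dμ₁/dμ₂)| dμ₁ ≤ I + √(2 I)`. -/
theorem stmt0 {α : Type*} [MeasurableSpace α] (μ₁ μ₂ : Measure α)
    [IsProbabilityMeasure μ₁] [IsProbabilityMeasure μ₂] (hac : μ₁ ≪ μ₂)
    (hint : Integrable (fun x => Real.log ((μ₁.rnDeriv μ₂ x).toReal)) μ₁)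
    (I : ℝ) (hI : I = ∫ x, Real.log ((μ₁.rnDeriv μ₂ x).toReal) ∂μ₁) :
    ∫ x, |Real.log ((μ₁.rnDeriv μ₂ x).toReal)| ∂μ₁ ≤ I + Real.sqrt (2 * I) := by
  have hf_meas : Measurable (fun x => (μ₁.rnDeriv μ₂ x).toReal) :=
    (Measure.measurable_rnDeriv μ₁ μ₂).ennreal_toReal
  have hf_nonneg : ∀ x, 0 ≤ (μ₁.rnDeriv μ₂ x).toReal := fun x => ENNReal.toReal_nonneg
  have hf_int : Integrable (fun x => (μ₁.rnDeriv μ₂ x).toReal) μ₂ :=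
    Measure.integrable_toReal_rnDeriv
  have hf_one : ∫ x, (μ₁.rnDeriv μ₂ x).toReal ∂μ₂ = 1 := by
    rw [Measure.integral_toReal_rnDeriv hac]; simp
  -- positive part of -log
  have hposL : Integrable (fun x => max (-(Real.log ((μ₁.rnDeriv μ₂ x).toReal))) 0) μ₁ :=
    hint.neg.pos_part
  -- split |log| = log + 2 * (log)⁻
  have hsplit : ∫ x, |Real.log ((μ₁.rnDeriv μ₂ x).toReal)| ∂μ₁
      = I + 2 * ∫ x, max (-(Real.log ((μ₁.rnDeriv μ₂ x).toReal))) 0 ∂μ₁ := by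
    have habs : ∀ x, |Real.log ((μ₁.rnDeriv μ₂ x).toReal)|
        = Real.log ((μ₁.rnDeriv μ₂ x).toReal)
          + 2 * max (-(Real.log ((μ₁.rnDeriv μ₂ x).toReal))) 0 := by
      intro x
      rcases le_total 0 (Real.log ((μ₁.rnDeriv μ₂ x).toReal)) with h | h
      · rw [abs_of_nonneg h, max_eq_right (by linarith)]; ring
      · rw [abs_of_nonpos h, max_eq_left (by linarith)]; ring
    simp_rw [habs]
    rw [integral_add hint (hposL.const_mul 2), integral_const_mul, hI]
  -- move J to μ₂
  have hJmu2 : ∫ x, max (-(Real.log ((μ₁.rnDeriv μ₂ x).toReal))) 0 ∂μ₁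
      = ∫ x, (μ₁.rnDeriv μ₂ x).toReal * max (-(Real.log ((μ₁.rnDeriv μ₂ x).toReal))) 0 ∂μ₂ := by
    have := integral_rnDeriv_smul hac
      (f := fun x => max (-(Real.log ((μ₁.rnDeriv μ₂ x).toReal))) 0)
    simp only [smul_eq_mul] at this
    exact this.symm
  have hfg_int : Integrable
      (fun x => (μ₁.rnDeriv μ₂ x).toReal * max (-(Real.log ((μ₁.rnDeriv μ₂ x).toReal))) 0) μ₂ := by
    have := (integrable_rnDeriv_smul_iff hac).mpr hposL
    simpa only [smul_eq_mul] using this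
  -- f * log f over μ₂
  have hfL_int : Integrable
      (fun x => (μ₁.rnDeriv μ₂ x).toReal * Real.log ((μ₁.rnDeriv μ₂ x).toReal)) μ₂ := by
    have := (integrable_rnDeriv_smul_iff hac).mpr hint
    simpa only [smul_eq_mul] using this
  have hfL_val : ∫ x, (μ₁.rnDeriv μ₂ x).toReal * Real.log ((μ₁.rnDeriv μ₂ x).toReal) ∂μ₂ = I := by
    have := integral_rnDeriv_smul hac
      (f := fun x => Real.log ((μ₁.rnDeriv μ₂ x).toReal))
    simp only [smul_eq_mul] at this
    rw [this, hI]
  -- basic integrability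
  have hfm1 : Integrable (fun x => (μ₁.rnDeriv μ₂ x).toReal - 1) μ₂ := hf_int.sub (integrable_const 1)
  have habs1 : Integrable (fun x => |(μ₁.rnDeriv μ₂ x).toReal - 1|) μ₂ := hfm1.abs
  have hq_int : Integrable
      (fun x => (|(μ₁.rnDeriv μ₂ x).toReal - 1| - ((μ₁.rnDeriv μ₂ x).toReal - 1)) / 2) μ₂ :=
    (habs1.sub hfm1).div_const 2
  set T : ℝ := ∫ x, |(μ₁.rnDeriv μ₂ x).toReal - 1| ∂μ₂ with hT_def
  have hq_val : ∫ x, (|(μ₁.rnDeriv μ₂ x).toReal - 1| - ((μ₁.rnDeriv μ₂ x).toReal - 1)) / 2 ∂μ₂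
      = T / 2 := by
    rw [integral_div, integral_sub habs1 hfm1, integral_sub hf_int (integrable_const 1), hf_one]
    simp [T]
  -- J ≤ T/2
  have hJT : ∫ x, max (-(Real.log ((μ₁.rnDeriv μ₂ x).toReal))) 0 ∂μ₁ ≤ T / 2 := by
    rw [hJmu2, ← hq_val]
    exact integral_mono hfg_int hq_int (fun x => ptwise1 (hf_nonneg x))
  -- χ² type quantity
  set K : ℝ := ∫ x, ((μ₁.rnDeriv μ₂ x).toReal - 1)^2 / ((μ₁.rnDeriv μ₂ x).toReal + 2) ∂μ₂ with hK_def
  have hbound_int : Integrable (fun x =>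
      2/3 * ((μ₁.rnDeriv μ₂ x).toReal * Real.log ((μ₁.rnDeriv μ₂ x).toReal)
        - (μ₁.rnDeriv μ₂ x).toReal + 1)) μ₂ :=
    (((hfL_int.sub hf_int).add (integrable_const 1)).const_mul (2/3))
  have hptwise3 : ∀ x, ((μ₁.rnDeriv μ₂ x).toReal - 1)^2 / ((μ₁.rnDeriv μ₂ x).toReal + 2)
      ≤ 2/3 * ((μ₁.rnDeriv μ₂ x).toReal * Real.log ((μ₁.rnDeriv μ₂ x).toReal)
        - (μ₁.rnDeriv μ₂ x).toReal + 1) := by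
    intro x
    have := key_ineq (hf_nonneg x)
    linarith
  have hK_int : Integrable
      (fun x => ((μ₁.rnDeriv μ₂ x).toReal - 1)^2 / ((μ₁.rnDeriv μ₂ x).toReal + 2)) μ₂ := by
    apply hbound_int.mono'
    · exact (((hf_meas.sub measurable_const).pow_const 2).div
        (hf_meas.add_const 2)).aestronglyMeasurable
    · filter_upwards with x
      have h2 : (0:ℝ) < (μ₁.rnDeriv μ₂ x).toReal + 2 := by linarith [hf_nonneg x]
      rw [Real.norm_eq_abs, abs_of_nonneg (by positivity)]
      exact hptwise3 x
  have hK_nonneg : 0 ≤ K := by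
    apply integral_nonneg
    intro x
    have h2 : (0:ℝ) < (μ₁.rnDeriv μ₂ x).toReal + 2 := by linarith [hf_nonneg x]
    positivity
  have hK_le : K ≤ 2/3 * I := by
    calc K ≤ ∫ x, 2/3 * ((μ₁.rnDeriv μ₂ x).toReal * Real.log ((μ₁.rnDeriv μ₂ x).toReal)
          - (μ₁.rnDeriv μ₂ x).toReal + 1) ∂μ₂ := integral_mono hK_int hbound_int hptwise3
      _ = 2/3 * I := by
          have hsub : Integrable (fun x => (μ₁.rnDeriv μ₂ x).toReal * Real.log ((μ₁.rnDeriv μ₂ x).toReal)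
              - (μ₁.rnDeriv μ₂ x).toReal) μ₂ := hfL_int.sub hf_int
          rw [integral_const_mul, integral_add hsub (integrable_const 1),
            integral_sub hfL_int hf_int, hfL_val, hf_one]
          simp
  -- the λ bound
  have hT_le : ∀ l : ℝ, 0 < l → T ≤ (l * K + 3 / l) / 2 := by
    intro l hl
    have hr_int : Integrable (fun x =>
        (l * (((μ₁.rnDeriv μ₂ x).toReal - 1)^2 / ((μ₁.rnDeriv μ₂ x).toReal + 2))
          + ((μ₁.rnDeriv μ₂ x).toReal + 2) / l) / 2) μ₂ :=
      (((hK_int.const_mul l).add ((hf_int.add (integrable_const 2)).div_const l)).div_const 2)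
    have h1 : T ≤ ∫ x, (l * (((μ₁.rnDeriv μ₂ x).toReal - 1)^2 / ((μ₁.rnDeriv μ₂ x).toReal + 2))
        + ((μ₁.rnDeriv μ₂ x).toReal + 2) / l) / 2 ∂μ₂ :=
      integral_mono habs1 hr_int (fun x => ptwise2 (hf_nonneg x) hl)
    have h2 : ∫ x, (l * (((μ₁.rnDeriv μ₂ x).toReal - 1)^2 / ((μ₁.rnDeriv μ₂ x).toReal + 2))
        + ((μ₁.rnDeriv μ₂ x).toReal + 2) / l) / 2 ∂μ₂ = (l * K + 3 / l) / 2 := by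
      have ha : Integrable (fun x =>
          l * (((μ₁.rnDeriv μ₂ x).toReal - 1)^2 / ((μ₁.rnDeriv μ₂ x).toReal + 2))) μ₂ :=
        hK_int.const_mul l
      have hb : Integrable (fun x => ((μ₁.rnDeriv μ₂ x).toReal + 2) / l) μ₂ :=
        (hf_int.add (integrable_const 2)).div_const l
      have hc : Integrable (fun x => (μ₁.rnDeriv μ₂ x).toReal + 2) μ₂ :=
        hf_int.add (integrable_const 2)
      rw [integral_div, integral_add ha hb, integral_const_mul, integral_div,
        integral_add hf_int (integrable_const 2), hf_one]
      norm_num [K]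
    linarith
  -- I ≥ 0
  have hI_nonneg : 0 ≤ I := by linarith
  -- T ≤ √(2I)
  have hT_sqrt : T ≤ Real.sqrt (2 * I) := by
    rcases eq_or_lt_of_le hI_nonneg with h0 | hIpos
    · have hK0 : K ≤ 0 := by linarith
      have hT0 : T ≤ 0 := by
        by_contra h
        push_neg at h
        have hb := hT_le (3 / T) (by positivity)
        have h3 : 3 / (3 / T) = T := by field_simp
        have hKT : (3 / T) * K ≤ 0 :=
          mul_nonpos_of_nonneg_of_nonpos (by positivity) hK0
        rw [h3] at hb
        linarith
      calc T ≤ 0 := hT0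
        _ ≤ Real.sqrt (2 * I) := Real.sqrt_nonneg _
    · set s : ℝ := Real.sqrt (2 * I) with hs_def
      have hs2 : s ^ 2 = 2 * I := Real.sq_sqrt (by linarith)
      have hspos : 0 < s := Real.sqrt_pos.mpr (by linarith)
      have hb := hT_le (3 / s) (by positivity)
      have hKmono : (3 / s) * K ≤ (3 / s) * (2/3 * I) :=
        mul_le_mul_of_nonneg_left hK_le (by positivity)
      have hcalc : ((3 / s) * (2/3 * I) + 3 / (3 / s)) / 2 = s := by
        field_simp
        nlinarith [hs2]
      linarith
  -- conclude
  rw [hsplit]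
  linarith
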